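/- If an r-uniform hypergraph H contains no copy of a given r-tree T with t edges, then H admits a proper coloring with t colors. -/

import Mathlib

open Finset

structure FinsetHypergraph (V : Type*) where
  edges : Finset (Finset V)

namespace FinsetHypergraph

variable {V : Type*} [DecidableEq V]

/-- `H` is `r`-uniform: every edge has exactly `r` vertices. -/
def Uniform (H : FinsetHypergraph V) (r : ℕ) : Prop := ∀ e ∈ H.edges, e.card = r

/-- Two vertices are adjacent if some edge contains both. -/
def adj (H : FinsetHypergraph V) (u w : V) : Prop := ∃ e ∈ H.edges, u ∈ e ∧ w ∈ e

/-- `H` is connected: any two vertices are joined by a walk. -/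
def Connected (H : FinsetHypergraph V) : Prop := ∀ u w : V, Relation.ReflTransGen H.adj u w

/-- No two distinct edges intersect in more than one vertex. -/
def Linear (H : FinsetHypergraph V) : Prop :=
  ∀ e ∈ H.edges, ∀ f ∈ H.edges, e ≠ f → (e ∩ f).card ≤ 1

/-- A Berge cycle: distinct vertices `v 0, …, v (k-1)` and distinct edges
`e 0, …, e (k-1)`, `k ≥ 2`, with `{v i, v (i+1)} ⊆ e i` cyclically. -/
def HasBergeCycle (H : FinsetHypergraph V) : Prop :=
  ∃ k : ℕ, ∃ _ : 2 ≤ k, ∃ (v : Fin k → V) (e : Fin k → Finset V),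
    Function.Injective v ∧ Function.Injective e ∧
    (∀ i, e i ∈ H.edges) ∧
    (∀ i : Fin k, v i ∈ e i ∧ v ⟨(i.val + 1) % k, Nat.mod_lt _ (by omega)⟩ ∈ e i)

/-- A hypertree: connected, linear, with no Berge cycle. -/
def IsHypertree (H : FinsetHypergraph V) : Prop :=
  H.Connected ∧ H.Linear ∧ ¬ H.HasBergeCycle

/-- A proper coloring: no edge is monochromatic. -/
def Proper (H : FinsetHypergraph V) {k : ℕ} (c : V → Fin k) : Prop :=
  ∀ e ∈ H.edges, ¬ ∀ u ∈ e, ∀ w ∈ e, c u = c w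

/-- The chromatic number: least number of colors in a proper coloring. -/
noncomputable def chromaticNumber (H : FinsetHypergraph V) : ℕ :=
  sInf {k | ∃ c : V → Fin k, H.Proper c}

/-- `H` contains a copy of `T`: an injective vertex map sending edges to edges. -/
def ContainsCopy {W : Type*} [DecidableEq W] (H : FinsetHypergraph V) (T : FinsetHypergraph W) : Prop :=
  ∃ φ : W → V, Function.Injective φ ∧ ∀ e ∈ T.edges, e.image φ ∈ H.edges

end FinsetHypergraph

/-- The complete `r`-uniform hypergraph on `Fin n`. -/
def completeHypergraph (n r : ℕ) : FinsetHypergraph (Fin n) :=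
  ⟨Finset.univ.powersetCard r⟩

set_option linter.unusedSectionVars false
set_option maxHeartbeats 1000000

namespace Stmt4Aux

variable {W : Type*}

inductive BPath : W → W → List W → List (Finset W) → Prop
  | nil (x : W) : BPath x x [x] []
  | cons {x y z : W} {h : Finset W} {vs : List W} {es : List (Finset W)} :
      BPath y z vs es → x ∈ h → y ∈ h → x ∉ vs → h ∉ es → BPath x z (x :: vs) (h :: es)

namespace BPath

theorem head_eq {x z : W} {vs es} (p : BPath x z vs es) : ∃ vs', vs = x :: vs' := by
  cases p
  · exact ⟨[], rfl⟩
  · exact ⟨_, rfl⟩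

theorem length_eq {x z : W} {vs es} (p : BPath x z vs es) : vs.length = es.length + 1 := by
  induction p with
  | nil => simp
  | cons _ _ _ _ _ ih => simp [ih]

theorem nodup_vs {x z : W} {vs es} (p : BPath x z vs es) : vs.Nodup := by
  induction p with
  | nil => simp
  | cons _ _ _ hx _ ih => exact List.nodup_cons.mpr ⟨hx, ih⟩

theorem nodup_es {x z : W} {vs es} (p : BPath x z vs es) : es.Nodup := by
  induction p with
  | nil => simp
  | cons _ _ _ _ he ih => exact List.nodup_cons.mpr ⟨he, ih⟩

theorem last_eq {x z : W} {vs es} (p : BPath x z vs es) :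
    ∀ (h : vs.length - 1 < vs.length), vs.get ⟨vs.length - 1, h⟩ = z := by
  induction p with
  | nil => intro h; rfl
  | @cons x y z hh vs es p hx hy hxv hhe ih =>
      intro h
      have hl : vs.length ≠ 0 := by
        obtain ⟨vs', rfl⟩ := p.head_eq; simp
      have h2 : (x :: vs).length - 1 = (vs.length - 1) + 1 := by
        cases' Nat.exists_eq_succ_of_ne_zero hl with n hn
        simp [hn]
      have := ih (by omega)
      simp only [h2]
      simpa using this

theorem chain {x z : W} {vs es} (p : BPath x z vs es) :
    ∀ i (hi : i < es.length),
      vs.get ⟨i, by have := p.length_eq; omega⟩ ∈ es.get ⟨i, hi⟩ ∧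
      vs.get ⟨i + 1, by have := p.length_eq; omega⟩ ∈ es.get ⟨i, hi⟩ := by
  induction p with
  | nil => intro i hi; simp at hi
  | @cons x y z hh vs es p hx hy hxv hhe ih =>
      intro i hi
      match i with
      | 0 =>
          obtain ⟨vs', rfl⟩ := p.head_eq
          exact ⟨hx, hy⟩
      | Nat.succ j =>
          have hj : j < es.length := by simpa using hi
          have := ih j hj
          simpa using this

theorem snoc {x z y : W} {h : Finset W} {vs es} (p : BPath x z vs es) :
    z ∈ h → y ∈ h → y ∉ vs → h ∉ es →
    BPath x y (vs ++ [y]) (es ++ [h]) := by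
  induction p with
  | nil w =>
      intro hz hy hyv hhe
      have hne : y ≠ w := by simpa [eq_comm] using hyv
      exact BPath.cons (BPath.nil y) hz hy (by simpa using hne.symm) (by simp)
  | @cons a b c hh vs es p ha hb hav hhes ih =>
      intro hz hy hyv hhe
      have hyv' : y ∉ vs := fun hmem => hyv (List.mem_cons_of_mem _ hmem)
      have hh' : h ∉ es := fun hmem => hhe (List.mem_cons_of_mem _ hmem)
      refine BPath.cons (ih hz hy hyv' hh') ha hb ?_ ?_
      · intro hmem
        rcases List.mem_append.mp hmem with h1 | h2
        · exact hav h1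
        · simp at h2; subst h2; exact hyv (by simp)
      · intro hmem
        rcases List.mem_append.mp hmem with h1 | h2
        · exact hhes h1
        · simp at h2; subst h2; exact hhe (by simp)

end BPath

variable [DecidableEq W]

def UkF (f : ℕ → Finset W) (k : ℕ) : Finset W := (Finset.range k).biUnion f

theorem UkF_succ (f : ℕ → Finset W) (k : ℕ) {a : W} :
    a ∈ UkF f (k + 1) ↔ a ∈ f k ∨ a ∈ UkF f k := by
  simp [UkF, Finset.range_add_one, or_comm]

theorem UkF_mono (f : ℕ → Finset W) {k l : ℕ} (h : k ≤ l) : UkF f k ⊆ UkF f l :=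
  Finset.biUnion_subset_biUnion_of_subset_left _ (Finset.range_subset_range.mpr h)

theorem mem_UkF {f : ℕ → Finset W} {k : ℕ} {a : W} :
    a ∈ UkF f k ↔ ∃ j, j < k ∧ a ∈ f j := by
  simp [UkF, Finset.mem_biUnion]

theorem UkF_congr {f f' : ℕ → Finset W} {k : ℕ} (h : ∀ j, j < k → f j = f' j) :
    UkF f k = UkF f' k := by
  unfold UkF
  apply Finset.biUnion_congr rfl
  intro j hj
  exact h j (Finset.mem_range.mp hj)

theorem cp (g : ℕ → Finset W) (t : ℕ)
    (hdist : ∀ i j, i < j → j < t → g i ≠ g j)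
    (hglue : ∀ i, 0 < i → i < t → (g i ∩ UkF g i).Nonempty) :
    ∀ k, 1 ≤ k → k ≤ t → ∀ x ∈ UkF g k, ∀ y ∈ UkF g k,
      ∃ vs es, BPath x y vs es ∧ (∀ v ∈ vs, v ∈ UkF g k) ∧
        (∀ h ∈ es, ∃ j, j < k ∧ h = g j) := by
  intro k hk
  induction k, hk using Nat.le_induction with
  | base =>
      intro hkt x hx y hy
      have hx0 : x ∈ g 0 := by
        rcases mem_UkF.mp hx with ⟨j, hj, hmem⟩
        interval_cases j; exact hmem
      have hy0 : y ∈ g 0 := by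
        rcases mem_UkF.mp hy with ⟨j, hj, hmem⟩
        interval_cases j; exact hmem
      by_cases hxy : x = y
      · subst hxy
        exact ⟨[x], [], BPath.nil x, by simpa using hx, by simp⟩
      · refine ⟨[x, y], [g 0], BPath.cons (BPath.nil y) hx0 hy0 (by simpa using hxy) (by simp),
          ?_, ?_⟩
        · intro v hv; rcases List.mem_cons.mp hv with h | h
          · subst h; exact hx
          · simp at h; subst h; exact hy
        · intro h hh; simp at hh; exact ⟨0, by omega, hh⟩
  | succ k hk ih =>
      intro hkt x hx y hy
      have hkt' : k ≤ t := by omega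
      have hklt : k < t := by omega
      have hgknotin : ∀ es : List (Finset W), (∀ h ∈ es, ∃ j, j < k ∧ h = g j) → g k ∉ es := by
        intro es hes hmem
        rcases hes _ hmem with ⟨j, hj, hje⟩
        exact hdist j k hj hklt hje.symm
      by_cases hxy : x = y
      · subst hxy
        exact ⟨[x], [], BPath.nil x, by simpa using hx, by simp⟩
      by_cases hxk : x ∈ UkF g k <;> by_cases hyk : y ∈ UkF g k
      · rcases ih hkt' x hxk y hyk with ⟨vs, es, p, hvs, hes⟩
        exact ⟨vs, es, p, fun v hv => UkF_mono g (by omega) (hvs v hv),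
          fun h hh => (hes h hh).imp fun j ⟨hj, he⟩ => ⟨by omega, he⟩⟩
      · -- x old, y new
        have hyg : y ∈ g k := ((UkF_succ g k).mp hy).resolve_right hyk
        rcases hglue k (by omega) hklt with ⟨c, hc⟩
        rw [Finset.mem_inter] at hc
        rcases ih hkt' x hxk c hc.2 with ⟨vs, es, p, hvs, hes⟩
        refine ⟨vs ++ [y], es ++ [g k],
          p.snoc hc.1 hyg (fun hm => hyk (hvs y hm)) (hgknotin es hes), ?_, ?_⟩
        · intro v hv
          rcases List.mem_append.mp hv with h | h
          · exact UkF_mono g (by omega) (hvs v h)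
          · simp at h; subst h; exact (UkF_succ g k).mpr (Or.inl hyg)
        · intro h hh
          rcases List.mem_append.mp hh with h1 | h1
          · exact (hes h h1).imp fun j ⟨hj, he⟩ => ⟨by omega, he⟩
          · simp at h1; exact ⟨k, by omega, h1⟩
      · -- x new, y old
        have hxg : x ∈ g k := ((UkF_succ g k).mp hx).resolve_right hxk
        rcases hglue k (by omega) hklt with ⟨c, hc⟩
        rw [Finset.mem_inter] at hc
        rcases ih hkt' c hc.2 y hyk with ⟨vs, es, p, hvs, hes⟩
        refine ⟨x :: vs, g k :: es,
          BPath.cons p hxg hc.1 (fun hm => hxk (hvs x hm)) (hgknotin es hes), ?_, ?_⟩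
        · intro v hv
          rcases List.mem_cons.mp hv with h | h
          · subst h; exact (UkF_succ g k).mpr (Or.inl hxg)
          · exact UkF_mono g (by omega) (hvs v h)
        · intro h hh
          rcases List.mem_cons.mp hh with h1 | h1
          · subst h1; exact ⟨k, by omega, rfl⟩
          · exact (hes h h1).imp fun j ⟨hj, he⟩ => ⟨by omega, he⟩
      · -- both new
        have hxg : x ∈ g k := ((UkF_succ g k).mp hx).resolve_right hxk
        have hyg : y ∈ g k := ((UkF_succ g k).mp hy).resolve_right hyk
        refine ⟨[x, y], [g k],
          BPath.cons (BPath.nil y) hxg hyg (by simpa using hxy) (by simp), ?_, ?_⟩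
        · intro v hv; rcases List.mem_cons.mp hv with h | h
          · subst h; exact hx
          · simp at h; subst h; exact hy
        · intro h hh; simp at hh; exact ⟨k, by omega, hh⟩

theorem crossing (T : FinsetHypergraph W) (U : Finset W) (b x : W)
    (hw : Relation.ReflTransGen T.adj b x) (hx : x ∈ U) :
    b ∉ U → ∃ h ∈ T.edges, (h ∩ U).Nonempty ∧ ∃ p ∈ h, p ∉ U := by
  induction hw using Relation.ReflTransGen.head_induction_on with
  | refl => intro hb; exact absurd hx hb
  | @head a c hadj htail ih =>
      intro hb
      by_cases hc : c ∈ U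
      · obtain ⟨e, he, hae, hce⟩ := hadj
        exact ⟨e, he, ⟨c, Finset.mem_inter.mpr ⟨hce, hc⟩⟩, a, hae, hb⟩
      · exact ih hc

theorem cover (T : FinsetHypergraph W) (hconn : T.Connected) (r : ℕ) (hr : 1 ≤ r)
    (hu : T.Uniform r) (hne : T.edges.Nonempty) (w : W) : ∃ e ∈ T.edges, w ∈ e := by
  obtain ⟨e0, he0⟩ := hne
  have : 0 < e0.card := by rw [hu e0 he0]; omega
  obtain ⟨y, hy⟩ := Finset.card_pos.mp this
  rcases Relation.ReflTransGen.cases_head (hconn w y) with heq | ⟨c, hadj, _⟩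
  · exact ⟨e0, he0, heq ▸ hy⟩
  · obtain ⟨e, he, hwe, _⟩ := hadj
    exact ⟨e, he, hwe⟩

theorem greedy (T : FinsetHypergraph W) (hconn : T.Connected) (r t : ℕ) (hr : 2 ≤ r)
    (hu : T.Uniform r) (hte : T.edges.card = t) :
    ∀ k, k ≤ t → ∃ g : ℕ → Finset W,
      (∀ i, i < k → g i ∈ T.edges) ∧
      (∀ i j, i < j → j < k → g i ≠ g j) ∧
      (∀ i, 0 < i → i < k → (g i ∩ UkF g i).Nonempty) := by
  intro k
  induction k with
  | zero =>
      intro _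
      exact ⟨fun _ => ∅, fun i hi => absurd hi (by omega),
        fun i j _ hj => absurd hj (by omega), fun i _ hi => absurd hi (by omega)⟩
  | succ k ih =>
      intro hk1
      obtain ⟨g, hmem, hdist, hglue⟩ := ih (by omega)
      set E := (Finset.range k).image g with hE
      have hEsub : E ⊆ T.edges := by
        intro e he
        obtain ⟨j, hj, rfl⟩ := Finset.mem_image.mp he
        exact hmem j (Finset.mem_range.mp hj)
      have hEcard : E.card < T.edges.card := by
        calc E.card ≤ k := le_trans (Finset.card_image_le) (by simp)
        _ < T.edges.card := by omega
      have hnew : ∃ a ∈ T.edges, a ∉ E := by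
        by_contra hno
        push_neg at hno
        have : T.edges ⊆ E := fun e he => hno e he
        exact absurd (Finset.card_le_card this) (by omega)
      obtain ⟨a, haT, haE⟩ := hnew
      by_cases hk0 : k = 0
      · subst hk0
        exact ⟨fun _ => a, fun i _ => haT,
          fun i j hij hj => absurd (by omega : j < 1) (by omega),
          fun i hi0 hi1 => absurd hi1 (by omega)⟩
      · -- k ≥ 1
        have hUne : (UkF g k).Nonempty := by
          have h0 : 0 < (g 0).card := by rw [hu (g 0) (hmem 0 (by omega))]; omega
          obtain ⟨x0, hx0⟩ := Finset.card_pos.mp h0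
          exact ⟨x0, mem_UkF.mpr ⟨0, by omega, hx0⟩⟩
        have key : ∃ aa ∈ T.edges, aa ∉ E ∧ (aa ∩ UkF g k).Nonempty := by
          by_cases haU : (a ∩ UkF g k).Nonempty
          · exact ⟨a, haT, haE, haU⟩
          · have haU' : ∀ z ∈ a, z ∉ UkF g k := by
              intro z hz hzU
              exact haU ⟨z, Finset.mem_inter.mpr ⟨hz, hzU⟩⟩
            have h0 : 0 < a.card := by rw [hu a haT]; omega
            obtain ⟨b, hb⟩ := Finset.card_pos.mp h0
            obtain ⟨x0, hx0⟩ := hUne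
            obtain ⟨h, hhT, hhU, p, hph, hpU⟩ :=
              crossing T (UkF g k) b x0 (hconn b x0) hx0 (haU' b hb)
            refine ⟨h, hhT, ?_, hhU⟩
            intro hhE
            obtain ⟨j, hj, rfl⟩ := Finset.mem_image.mp hhE
            exact hpU (mem_UkF.mpr ⟨j, Finset.mem_range.mp hj, hph⟩)
        obtain ⟨aa, haaT, haaE, haaU⟩ := key
        refine ⟨fun n => if n = k then aa else g n, ?_, ?_, ?_⟩
        · intro i hi
          show (if i = k then aa else g i) ∈ T.edges
          by_cases h : i = k
          · simp [h, haaT]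
          · rw [if_neg h]
            exact hmem i (by omega)
        · intro i j hij hj
          show (if i = k then aa else g i) ≠ (if j = k then aa else g j)
          by_cases h : j = k
          · have hik : i ≠ k := by omega
            rw [if_neg hik, if_pos h]
            intro heq
            exact haaE (heq ▸ Finset.mem_image.mpr ⟨i, Finset.mem_range.mpr (by omega), rfl⟩)
          · have hik : i ≠ k := by omega
            have hjk : j ≠ k := h
            rw [if_neg hik, if_neg hjk]
            exact hdist i j hij (by omega)
        · intro i hi0 hi1
          show ((if i = k then aa else g i) ∩ UkF (fun n => if n = k then aa else g n) i).Nonempty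
          have hcongr : UkF (fun n => if n = k then aa else g n) i = UkF g i := by
            apply UkF_congr
            intro j hj
            have : j ≠ k := by omega
            simp [this]
          by_cases h : i = k
          · subst h
            rw [if_pos rfl, hcongr]
            exact haaU
          · have hik : i ≠ k := h
            rw [if_neg hik, hcongr]
            exact hglue i hi0 (by omega)


theorem card_inter_le_one (T : FinsetHypergraph W) (hnc : ¬ T.HasBergeCycle)
    (g : ℕ → Finset W) (t : ℕ)
    (hmem : ∀ i, i < t → g i ∈ T.edges)
    (hdist : ∀ i j, i < j → j < t → g i ≠ g j)
    (hglue : ∀ i, 0 < i → i < t → (g i ∩ UkF g i).Nonempty) :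
    ∀ i0, 0 < i0 → i0 < t → (g i0 ∩ UkF g i0).card ≤ 1 := by
  intro i0 hi0 hi0t
  by_contra hcard
  push_neg at hcard
  obtain ⟨x, hx, y, hy, hxy⟩ := Finset.one_lt_card.mp hcard
  rw [Finset.mem_inter] at hx hy
  obtain ⟨vs, es, p, hvs, hes⟩ :=
    cp g t hdist hglue i0 (by omega) (by omega) x hx.2 y hy.2
  apply hnc
  have hlen := p.length_eq
  have hk2 : 2 ≤ vs.length := by
    rcases Nat.lt_or_ge vs.length 2 with h | h
    · exfalso
      have hes0 : es.length = 0 := by omega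
      have h1 : vs.length - 1 < vs.length := by omega
      have hlast := p.last_eq h1
      obtain ⟨vs', hvs'⟩ := p.head_eq
      have hnil : vs' = [] := by
        have hl1 : vs.length = 1 := by omega
        rw [hvs'] at hl1; simpa using hl1
      subst hnil
      subst hvs'
      simp at hlast
      exact hxy hlast
    · exact h
  refine ⟨vs.length, hk2, vs.get,
    fun i => if h : i.val < es.length then es.get ⟨i.val, h⟩ else g i0, ?_, ?_, ?_, ?_⟩
  · exact List.nodup_iff_injective_get.mp p.nodup_vs
  · intro i j hij
    by_cases hi : i.val < es.length <;> by_cases hj : j.val < es.length <;>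
      simp only [hi, hj, dif_pos, dif_neg, not_false_iff] at hij
    · have h2 := List.nodup_iff_injective_get.mp p.nodup_es (by simpa using hij :
        es.get ⟨i.val, hi⟩ = es.get ⟨j.val, hj⟩)
      have h3 : i.val = j.val := congrArg (Fin.val : Fin es.length → ℕ) h2
      exact Fin.ext h3
    · exfalso
      have hmemi : es.get ⟨i.val, hi⟩ ∈ es := List.get_mem es ⟨i.val, hi⟩
      obtain ⟨j', hj', hje⟩ := hes _ hmemi
      exact hdist j' i0 hj' hi0t (by rw [← hje, hij])
    · exfalso
      have hmemj : es.get ⟨j.val, hj⟩ ∈ es := List.get_mem es ⟨j.val, hj⟩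
      obtain ⟨j', hj', hje⟩ := hes _ hmemj
      exact hdist j' i0 hj' hi0t (by rw [← hje, ← hij])
    · have : i.val = j.val := by omega
      exact Fin.ext this
  · intro i
    by_cases hi : i.val < es.length
    · simp only [hi, dif_pos]
      obtain ⟨j', hj', hje⟩ := hes _ (List.get_mem es ⟨i.val, hi⟩)
      rw [hje]; exact hmem j' (by omega)
    · simp only [hi, dif_neg, not_false_iff]
      exact hmem i0 hi0t
  · intro i
    by_cases hi : i.val < es.length
    · simp only [hi, dif_pos]
      have hchain := p.chain i.val hi
      constructor
      · exact hchain.1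
      · have hmod : (i.val + 1) % vs.length = i.val + 1 := Nat.mod_eq_of_lt (by omega)
        have : (⟨(i.val + 1) % vs.length, Nat.mod_lt _ (by omega)⟩ : Fin vs.length)
            = ⟨i.val + 1, by omega⟩ := Fin.ext hmod
        rw [this]
        exact hchain.2
    · simp only [hi, dif_neg, not_false_iff]
      have hival : i.val = vs.length - 1 := by have := i.isLt; omega
      constructor
      · have hi' : i = (⟨vs.length - 1, by omega⟩ : Fin vs.length) := Fin.ext hival
        have h6 : vs.get i = y := by rw [hi']; exact p.last_eq _
        rw [h6]; exact hy.1
      · have hmod : (i.val + 1) % vs.length = 0 := by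
          rw [hival]
          have : vs.length - 1 + 1 = vs.length := by omega
          rw [this, Nat.mod_self]
        have heq : (⟨(i.val + 1) % vs.length, Nat.mod_lt _ (by omega)⟩ : Fin vs.length)
            = ⟨0, by omega⟩ := Fin.ext hmod
        rw [heq]
        obtain ⟨vs', hvs'⟩ := p.head_eq
        subst hvs'
        exact hx.1


theorem exists_ordering {W : Type*} [Fintype W] [DecidableEq W] (T : FinsetHypergraph W)
    (r t : ℕ) (hr : 2 ≤ r) (ht : 1 ≤ t)
    (hconn : T.Connected) (hnc : ¬ T.HasBergeCycle) (hu : T.Uniform r)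
    (hte : T.edges.card = t) :
    ∃ g : ℕ → Finset W,
      (∀ i, i < t → g i ∈ T.edges) ∧
      (∀ i, 0 < i → i < t → (g i ∩ UkF g i).card = 1) ∧
      UkF g t = Finset.univ ∧
      (Finset.range t).image g = T.edges := by
  obtain ⟨g, hmem, hdist, hglue⟩ := greedy T hconn r t hr hu hte t le_rfl
  have hle1 := card_inter_le_one T hnc g t hmem hdist hglue
  have hone : ∀ i, 0 < i → i < t → (g i ∩ UkF g i).card = 1 := by
    intro i h0 h1
    have hp := (hglue i h0 h1).card_pos
    have hq := hle1 i h0 h1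
    omega
  have himg : (Finset.range t).image g = T.edges := by
    apply Finset.eq_of_subset_of_card_le
    · intro e he
      obtain ⟨j, hj, rfl⟩ := Finset.mem_image.mp he
      exact hmem j (Finset.mem_range.mp hj)
    · rw [hte, Finset.card_image_of_injOn]
      · simp
      · intro i hi j hj hij
        simp only [Finset.coe_range, Set.mem_Iio] at hi hj
        rcases lt_trichotomy i j with h | h | h
        · exact absurd hij (hdist i j h hj)
        · exact h
        · exact absurd hij.symm (hdist j i h hi)
  refine ⟨g, hmem, hone, ?_, himg⟩
  apply Finset.eq_univ_iff_forall.mpr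
  intro w
  have hedges_ne : T.edges.Nonempty := Finset.card_pos.mp (by omega)
  obtain ⟨e, heT, hwe⟩ := cover T hconn r (by omega) hu hedges_ne w
  rw [← himg] at heT
  obtain ⟨j, hj, rfl⟩ := Finset.mem_image.mp heT
  exact mem_UkF.mpr ⟨j, Finset.mem_range.mp hj, hwe⟩

section Main

variable {W : Type*} [DecidableEq W] {V : Type*} [DecidableEq V]

def CopyIn (H : FinsetHypergraph V) (S : Finset V) (f : ℕ → Finset W) (k : ℕ) (φ : W → V) : Prop :=
  Set.InjOn φ (UkF f k : Finset W) ∧ ∀ j, j < k → (f j).image φ ∈ H.edges ∧ (f j).image φ ⊆ S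

theorem CopyIn.mono {H : FinsetHypergraph V} {S S' : Finset V} {f : ℕ → Finset W} {k : ℕ}
    {φ : W → V} (hSS : S ⊆ S') (h : CopyIn H S f k φ) : CopyIn H S' f k φ :=
  ⟨h.1, fun j hj => ⟨(h.2 j hj).1, (h.2 j hj).2.trans hSS⟩⟩

theorem CopyIn.maps_into {H : FinsetHypergraph V} {S : Finset V} {f : ℕ → Finset W} {k : ℕ}
    {φ : W → V} (h : CopyIn H S f k φ) : ∀ x ∈ UkF f k, φ x ∈ S := by
  intro x hx
  obtain ⟨j, hj, hxj⟩ := mem_UkF.mp hx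
  exact (h.2 j hj).2 (Finset.mem_image_of_mem φ hxj)

theorem main_color (H : FinsetHypergraph V) (r : ℕ) (hr : 2 ≤ r) (hH : H.Uniform r) :
    ∀ t, 1 ≤ t → ∀ f : ℕ → Finset W,
      (∀ i, i < t → (f i).card = r) →
      (∀ i, 0 < i → i < t → (f i ∩ UkF f i).card = 1) →
      ∀ S : Finset V, (¬ ∃ φ, CopyIn H S f t φ) →
      ∃ c : V → Fin t, ∀ e ∈ H.edges, e ⊆ S → ¬ ∀ u ∈ e, ∀ z ∈ e, c u = c z := by
  intro t ht
  induction t, ht using Nat.le_induction with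
  | base =>
      intro f hcard hglue S hfree
      refine ⟨fun _ => 0, ?_⟩
      intro e he heS _
      apply hfree
      have hc : (f 0).card = e.card := by rw [hcard 0 (by omega), hH e he]
      let g2 := Finset.equivOfCardEq hc
      have hene : e.Nonempty := Finset.card_pos.mp (by rw [hH e he]; omega)
      obtain ⟨v0, hv0⟩ := hene
      have hU : UkF f 1 = f 0 := by simp [UkF]
      set φ : W → V := fun x => if hx : x ∈ f 0 then (g2 ⟨x, hx⟩ : V) else v0 with hφ
      have hinj : Set.InjOn φ (f 0 : Finset W) := by
        intro a ha b hb hab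
        have ha' : a ∈ f 0 := ha
        have hb' : b ∈ f 0 := hb
        rw [hφ] at hab
        simp only [dif_pos ha', dif_pos hb'] at hab
        have h2 := g2.injective (Subtype.ext hab)
        exact congrArg Subtype.val h2
      have himg : (f 0).image φ = e := by
        apply Finset.eq_of_subset_of_card_le
        · intro y hy
          obtain ⟨x, hx, rfl⟩ := Finset.mem_image.mp hy
          simp only [hφ, dif_pos hx]
          exact (g2 ⟨x, hx⟩).2
        · rw [Finset.card_image_of_injOn hinj, hc]
      refine ⟨φ, ?_, ?_⟩
      · rw [hU]; exact hinj
      · intro j hj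
        have hj0 : j = 0 := by omega
        subst hj0
        rw [himg]
        exact ⟨he, heS⟩
  | succ t ht ih =>
      intro f hcard hglue S0 hfree0
      have hw1 : (f t ∩ UkF f t).card = 1 := hglue t (by omega) (by omega)
      obtain ⟨w, hw⟩ := Finset.card_eq_one.mp hw1
      have hwmem : w ∈ f t ∩ UkF f t := by rw [hw]; exact Finset.mem_singleton_self w
      have hwft : w ∈ f t := (Finset.mem_inter.mp hwmem).1
      have hwU : w ∈ UkF f t := (Finset.mem_inter.mp hwmem).2
      have hdisj2 : ∀ a ∈ (f t).erase w, a ∉ UkF f t := by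
        intro a ha hmem
        have : a ∈ f t ∩ UkF f t :=
          Finset.mem_inter.mpr ⟨Finset.mem_of_mem_erase ha, hmem⟩
        rw [hw] at this
        exact (Finset.ne_of_mem_erase ha) (Finset.mem_singleton.mp this)
      have inner : ∀ n (S : Finset V), S.card = n → (¬ ∃ φ, CopyIn H S f (t + 1) φ) →
          ∃ (c : V → Fin (t + 1)) (ρ : V → ℕ),
            (∀ e ∈ H.edges, e ⊆ S → ¬ ∀ u ∈ e, ∀ z ∈ e, c u = c z) ∧
            (∀ v ∈ S, c v = Fin.last t → ρ v ≤ S.card) ∧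
            (∀ v ∈ S, ∀ u ∈ S, c v = Fin.last t → c u = Fin.last t → ρ v = ρ u → v = u) ∧
            (∀ v ∈ S, c v = Fin.last t → ∃ φ, CopyIn H S f t φ ∧ φ w = v ∧
              ∀ x ∈ S, c x = Fin.last t → ρ v < ρ x → x ∉ (UkF f t).image φ) := by
        intro n
        induction n using Nat.strong_induction_on with
        | _ n innerih =>
          intro S hScard hfree
          by_cases hroot : ∃ φ, CopyIn H S f t φ
          · obtain ⟨φ0, hφ0⟩ := hroot
            have hvS : φ0 w ∈ S := hφ0.maps_into w hwU
            set v : V := φ0 w with hvdef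
            have hSpos : 0 < S.card := Finset.card_pos.mpr ⟨v, hvS⟩
            have hS'card : (S.erase v).card = S.card - 1 := Finset.card_erase_of_mem hvS
            have hfree' : ¬ ∃ φ, CopyIn H (S.erase v) f (t + 1) φ := by
              rintro ⟨φ, hφ⟩
              exact hfree ⟨φ, hφ.mono (Finset.erase_subset v S)⟩
            obtain ⟨c', ρ', hP1, hP2, hP3, hP4⟩ :=
              innerih (S.erase v).card (by omega) (S.erase v) rfl hfree'
            set c : V → Fin (t + 1) := Function.update c' v (Fin.last t) with hcdef
            set ρ : V → ℕ := Function.update ρ' v S.card with hρdef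
            have hcv : c v = Fin.last t := Function.update_self v _ c'
            have hρv : ρ v = S.card := Function.update_self v _ ρ'
            have hcx : ∀ x, x ≠ v → c x = c' x := fun x hx => Function.update_of_ne hx _ c'
            have hρx : ∀ x, x ≠ v → ρ x = ρ' x := fun x hx => Function.update_of_ne hx _ ρ'
            -- P2
            have hP2S : ∀ u ∈ S, c u = Fin.last t → ρ u ≤ S.card := by
              intro u huS hul
              by_cases h : u = v
              · subst h; rw [hρv]
              · rw [hρx u h]
                have := hP2 u (Finset.mem_erase.mpr ⟨h, huS⟩) (by rw [← hcx u h]; exact hul)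
                omega
            -- P3
            have hP3S : ∀ v1 ∈ S, ∀ u1 ∈ S, c v1 = Fin.last t → c u1 = Fin.last t →
                ρ v1 = ρ u1 → v1 = u1 := by
              intro v1 hv1 u1 hu1 hc1 hc2 hρeq
              by_cases h1 : v1 = v <;> by_cases h2 : u1 = v
              · rw [h1, h2]
              · exfalso
                have := hP2 u1 (Finset.mem_erase.mpr ⟨h2, hu1⟩) (by rw [← hcx u1 h2]; exact hc2)
                rw [h1, hρv] at hρeq
                rw [hρx u1 h2] at hρeq
                omega
              · exfalso
                have := hP2 v1 (Finset.mem_erase.mpr ⟨h1, hv1⟩) (by rw [← hcx v1 h1]; exact hc1)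
                rw [h2, hρv] at hρeq
                rw [hρx v1 h1] at hρeq
                omega
              · exact hP3 v1 (Finset.mem_erase.mpr ⟨h1, hv1⟩) u1 (Finset.mem_erase.mpr ⟨h2, hu1⟩)
                  (by rw [← hcx v1 h1]; exact hc1) (by rw [← hcx u1 h2]; exact hc2)
                  (by rw [← hρx v1 h1, ← hρx u1 h2]; exact hρeq)
            -- P4
            have hP4S : ∀ u ∈ S, c u = Fin.last t → ∃ φ, CopyIn H S f t φ ∧ φ w = u ∧
                ∀ x ∈ S, c x = Fin.last t → ρ u < ρ x → x ∉ (UkF f t).image φ := by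
              intro u huS hul
              by_cases h : u = v
              · subst h
                refine ⟨φ0, hφ0, rfl, ?_⟩
                intro x hxS hxl hlt
                exfalso
                by_cases hx : x = v
                · subst hx; rw [hρv] at hlt; omega
                · have := hP2 x (Finset.mem_erase.mpr ⟨hx, hxS⟩) (by rw [← hcx x hx]; exact hxl)
                  rw [hρv, hρx x hx] at hlt
                  omega
              · obtain ⟨ψ, hψ, hψw, havoid⟩ :=
                  hP4 u (Finset.mem_erase.mpr ⟨h, huS⟩) (by rw [← hcx u h]; exact hul)
                refine ⟨ψ, hψ.mono (Finset.erase_subset v S), hψw, ?_⟩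
                intro x hxS hxl hlt
                by_cases hx : x = v
                · subst hx
                  intro hmem
                  obtain ⟨a, haU, hae⟩ := Finset.mem_image.mp hmem
                  have : ψ a ∈ S.erase v := hψ.maps_into a haU
                  rw [hae] at this
                  exact (Finset.mem_erase.mp this).1 rfl
                · exact havoid x (Finset.mem_erase.mpr ⟨hx, hxS⟩)
                    (by rw [← hcx x hx]; exact hxl)
                    (by rw [← hρx u h, ← hρx x hx]; exact hlt)
            -- P1
            have hP1S : ∀ e ∈ H.edges, e ⊆ S → ¬ ∀ u ∈ e, ∀ z ∈ e, c u = c z := by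
              intro e he heS hmono
              by_cases hve : v ∈ e
              · have hall : ∀ u ∈ e, c u = Fin.last t := by
                  intro u hu
                  rw [hmono u hu v hve, hcv]
                obtain ⟨u, hue, humin⟩ := Finset.exists_min_image e ρ ⟨v, hve⟩
                have hult : ∀ x ∈ e, x ≠ u → ρ u < ρ x := by
                  intro x hx hne
                  rcases lt_or_eq_of_le (humin x hx) with h | h
                  · exact h
                  · exact absurd (hP3S x (heS hx) u (heS hue) (hall x hx) (hall u hue) h.symm)
                      hne
                obtain ⟨ψ, hψ, hψw, havoid⟩ := hP4S u (heS hue) (hall u hue)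
                have hdisj : ∀ x ∈ e, x ≠ u → x ∉ (UkF f t).image ψ := fun x hx hne =>
                  havoid x (heS hx) (hall x hx) (hult x hx hne)
                apply hfree
                have hecards : ((f t).erase w).card = (e.erase u).card := by
                  rw [Finset.card_erase_of_mem hue, Finset.card_erase_of_mem hwft,
                    hH e he, hcard t (by omega)]
                let g2 := Finset.equivOfCardEq hecards
                set φ : W → V :=
                  fun x => if hx : x ∈ (f t).erase w then (g2 ⟨x, hx⟩ : V) else ψ x with hφdef
                have hφD : ∀ x (hx : x ∈ (f t).erase w), φ x = (g2 ⟨x, hx⟩ : V) := by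
                  intro x hx; simp only [hφdef, dif_pos hx]
                have hφnD : ∀ x, x ∉ (f t).erase w → φ x = ψ x := by
                  intro x hx; simp only [hφdef, dif_neg hx]
                have hφDmem : ∀ x (hx : x ∈ (f t).erase w), φ x ∈ e.erase u := by
                  intro x hx; rw [hφD x hx]; exact (g2 ⟨x, hx⟩).2
                have hinjD : Set.InjOn φ ((f t).erase w : Finset W) := by
                  intro a ha b hb hab
                  have ha' : a ∈ (f t).erase w := ha
                  have hb' : b ∈ (f t).erase w := hb
                  rw [hφD a ha', hφD b hb'] at hab
                  have := g2.injective (Subtype.ext hab)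
                  exact congrArg Subtype.val this
                have himgD : ((f t).erase w).image φ = e.erase u := by
                  apply Finset.eq_of_subset_of_card_le
                  · intro y hy
                    obtain ⟨x, hx, rfl⟩ := Finset.mem_image.mp hy
                    exact hφDmem x hx
                  · rw [Finset.card_image_of_injOn hinjD, hecards]
                have hφw : φ w = u := by
                  rw [hφnD w (Finset.notMem_erase w _), hψw]
                have hUkeq : ∀ x ∈ UkF f t, φ x = ψ x := by
                  intro x hx
                  apply hφnD
                  intro hmem
                  exact hdisj2 x hmem hx
                refine ⟨φ, ?_, ?_⟩
                · intro a ha b hb hab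
                  have ha' : a ∈ UkF f (t + 1) := ha
                  have hb' : b ∈ UkF f (t + 1) := hb
                  have hsplit : ∀ x, x ∈ UkF f (t + 1) → x ∉ (f t).erase w → x ∈ UkF f t := by
                    intro x hx hxd
                    rcases (UkF_succ f t).mp hx with h | h
                    · by_cases hxw : x = w
                      · subst hxw; exact hwU
                      · exact absurd (Finset.mem_erase.mpr ⟨hxw, h⟩) hxd
                    · exact h
                  by_cases haD : a ∈ (f t).erase w <;> by_cases hbD : b ∈ (f t).erase w
                  · exact hinjD haD hbD hab
                  · exfalso
                    have hbU : b ∈ UkF f t := hsplit b hb' hbD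
                    have h1 : φ a ∈ e.erase u := hφDmem a haD
                    have h2 : φ a ∈ (UkF f t).image ψ := by
                      rw [hab, hUkeq b hbU]
                      exact Finset.mem_image_of_mem ψ hbU
                    exact hdisj (φ a) (Finset.mem_of_mem_erase h1)
                      (Finset.ne_of_mem_erase h1) h2
                  · exfalso
                    have haU : a ∈ UkF f t := hsplit a ha' haD
                    have h1 : φ b ∈ e.erase u := hφDmem b hbD
                    have h2 : φ b ∈ (UkF f t).image ψ := by
                      rw [← hab, hUkeq a haU]
                      exact Finset.mem_image_of_mem ψ haU
                    exact hdisj (φ b) (Finset.mem_of_mem_erase h1)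
                      (Finset.ne_of_mem_erase h1) h2
                  · have haU : a ∈ UkF f t := hsplit a ha' haD
                    have hbU : b ∈ UkF f t := hsplit b hb' hbD
                    rw [hUkeq a haU, hUkeq b hbU] at hab
                    exact hψ.1 (by exact haU) (by exact hbU) hab
                · intro j hj
                  by_cases hjt : j = t
                  · subst hjt
                    have hft : f j = insert w ((f j).erase w) := (Finset.insert_erase hwft).symm
                    have : (f j).image φ = e := by
                      rw [hft, Finset.image_insert, hφw, himgD, Finset.insert_erase hue]
                    rw [this]
                    exact ⟨he, heS⟩
                  · have hjlt : j < t := by omega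
                    have hfs : f j ⊆ UkF f t := by
                      intro x hx; exact mem_UkF.mpr ⟨j, hjlt, hx⟩
                    have : (f j).image φ = (f j).image ψ := by
                      apply Finset.image_congr
                      intro x hx
                      exact hUkeq x (hfs hx)
                    rw [this]
                    exact hψ.2 j hjlt
              · have hesub : e ⊆ S.erase v := Finset.subset_erase.mpr ⟨heS, hve⟩
                apply hP1 e he hesub
                intro u hu z hz
                have hu' : u ≠ v := fun h => hve (h ▸ hu)
                have hz' : z ≠ v := fun h => hve (h ▸ hz)
                rw [← hcx u hu', ← hcx z hz']
                exact hmono u hu z hz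
            exact ⟨c, ρ, hP1S, hP2S, hP3S, hP4S⟩
          · obtain ⟨c0, hc0⟩ := ih f (fun i hi => hcard i (by omega))
              (fun i h0 h1 => hglue i h0 (by omega)) S hroot
            refine ⟨fun x => (c0 x).castSucc, fun _ => 0, ?_, ?_, ?_, ?_⟩
            · intro e he heS hmono
              apply hc0 e he heS
              intro u hu z hz
              exact Fin.castSucc_injective t (hmono u hu z hz)
            · intro v _ hlast
              exact absurd hlast (Fin.castSucc_lt_last (c0 v)).ne
            · intro v _ u _ hlast
              exact absurd hlast (Fin.castSucc_lt_last (c0 v)).ne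
            · intro v _ hlast
              exact absurd hlast (Fin.castSucc_lt_last (c0 v)).ne
      obtain ⟨c, ρ, hP1, _, _, _⟩ := inner S0.card S0 rfl hfree0
      exact ⟨c, hP1⟩

end Main



end Stmt4Aux

/-- If an `r`-uniform hypergraph `H` contains no copy of a given `r`-tree `T` with
`t` edges, then `H` admits a proper coloring with `t` colors. -/
theorem stmt4 {V : Type*} [Fintype V] [DecidableEq V] (r t : ℕ) (hr : 2 ≤ r) (ht : 1 ≤ t)
    (H : FinsetHypergraph V) (hH : H.Uniform r)
    {W : Type*} [Fintype W] [DecidableEq W] (T : FinsetHypergraph W)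
    (hT : T.IsHypertree) (hu : T.Uniform r) (hte : T.edges.card = t)
    (hfree : ¬ H.ContainsCopy T) :
    ∃ c : V → Fin t, H.Proper c := by
  classical
  obtain ⟨hconn, hlin, hnc⟩ := hT
  obtain ⟨g, hgmem, hglue, hUuniv, himg⟩ :=
    Stmt4Aux.exists_ordering T r t hr ht hconn hnc hu hte
  have hcards : ∀ i, i < t → (g i).card = r := fun i hi => hu _ (hgmem i hi)
  have hfree' : ¬ ∃ φ, Stmt4Aux.CopyIn H (Finset.univ : Finset V) g t φ := by
    rintro ⟨φ, hφ⟩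
    apply hfree
    refine ⟨φ, ?_, ?_⟩
    · have h1 : Set.InjOn φ (Stmt4Aux.UkF g t : Finset W) := hφ.1
      rw [hUuniv, Finset.coe_univ] at h1
      exact Set.injOn_univ.mp h1
    · intro e he
      rw [← himg] at he
      obtain ⟨j, hj, rfl⟩ := Finset.mem_image.mp he
      exact (hφ.2 j (Finset.mem_range.mp hj)).1
  obtain ⟨c, hc⟩ := Stmt4Aux.main_color H r hr hH t ht g hcards hglue Finset.univ hfree'
  exact ⟨c, fun e he => hc e he (Finset.subset_univ e)⟩
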